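/- Let u ∈ ℝ^d be a unit vector, U₀ ⊂ ℤ^d \ {0} a finite set with ⟨z,u⟩ < 0 for all z ∈ U₀, and set M = max_{z∈U₀} ‖z‖. Let u₁,…,u_d be linearly independent unit vectors in ℝ^d with ⟨z, u_i⟩ < 0 for all z ∈ U₀ and all i, write u_i = v_i + u_i' with ⟨v_i, u_j⟩ = 0 for j ≠ i, and let λ_i > 0, R ∈ ℕ with λ_i‖v_i‖² R > M for all i. For x ∈ ℤ^d define B̂_x = {a ∈ ℝ^d : ∀i, ⟨a,u_i⟩/(λ_i‖v_i‖²R) ∈ [x_i, x_i+1)}. Then U₀ + B̂_x ⊆ ⋃_{z∈{0,−1}^d} B̂_{x+z}. -/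

import Mathlib

open scoped BigOperators

/-- Dot product on `ℝ^d`. -/
def dotR {d : ℕ} (a b : Fin d → ℝ) : ℝ := ∑ i, a i * b i

/-- Coercion `ℤ^d → ℝ^d`. -/
def toR {d : ℕ} (x : Fin d → ℤ) : Fin d → ℝ := fun i => (x i : ℝ)

/-- Geometric containment `U₀ + B̂_x ⊆ ⋃_{w ∈ {0,-1}^d} B̂_{x+w}` for the tessellation
`B̂_x = {a : ∀ i, ⟨a,uᵢ⟩/(λᵢ‖vᵢ‖²R) ∈ [xᵢ, xᵢ+1)}` adapted to directions `u₁,…,u_d`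
close to `u`, when `λᵢ‖vᵢ‖²R > M = max_{z∈U₀}‖z‖`. -/
theorem update_rule_box_containment {d : ℕ}
    (u : Fin d → ℝ) (hu : dotR u u = 1)
    (U₀ : Finset (Fin d → ℤ)) (hU₀ : U₀.Nonempty) (h0 : (0 : Fin d → ℤ) ∉ U₀)
    (hneg : ∀ z ∈ U₀, dotR (toR z) u < 0)
    (M : ℝ) (hM : ∀ z ∈ U₀, Real.sqrt (dotR (toR z) (toR z)) ≤ M)
    (uu : Fin d → (Fin d → ℝ)) (huunit : ∀ i, dotR (uu i) (uu i) = 1)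
    (hlin : LinearIndependent ℝ uu)
    (hnegi : ∀ z ∈ U₀, ∀ i, dotR (toR z) (uu i) < 0)
    (v u' : Fin d → (Fin d → ℝ))
    (hdecomp : ∀ i, uu i = v i + u' i)
    (horth : ∀ i j, i ≠ j → dotR (v i) (uu j) = 0)
    (hspan : ∀ i, u' i ∈ Submodule.span ℝ {w | ∃ j, j ≠ i ∧ w = uu j})
    (lam : Fin d → ℝ) (hlam : ∀ i, 0 < lam i)
    (R : ℕ) (hR : ∀ i, M < lam i * dotR (v i) (v i) * R)
    (x : Fin d → ℤ) (z : Fin d → ℤ) (hz : z ∈ U₀) (a : Fin d → ℝ)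
    (ha : ∀ i, dotR a (uu i) / (lam i * dotR (v i) (v i) * R)
      ∈ Set.Ico ((x i : ℝ)) ((x i : ℝ) + 1)) :
    ∃ w : Fin d → ℤ, (∀ i, w i = 0 ∨ w i = -1) ∧
      ∀ i, dotR (toR z + a) (uu i) / (lam i * dotR (v i) (v i) * R)
        ∈ Set.Ico (((x + w) i : ℝ)) (((x + w) i : ℝ) + 1) := by

  classical
  have hMnn : 0 ≤ M := by
    obtain ⟨z0, hz0⟩ := hU₀
    exact le_trans (Real.sqrt_nonneg _) (hM z0 hz0)
  have hc : ∀ i, 0 < lam i * dotR (v i) (v i) * R := fun i => lt_of_le_of_lt hMnn (hR i)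
  have ht : ∀ i, -(lam i * dotR (v i) (v i) * R) < dotR (toR z) (uu i) := by
    intro i
    have hcs : (dotR (toR z) (uu i)) ^ 2 ≤ dotR (toR z) (toR z) := by
      have h := Finset.sum_mul_sq_le_sq_mul_sq Finset.univ (toR z) (uu i)
      have h1 : (∑ j, uu i j ^ 2) = 1 := by
        simpa [dotR, sq] using huunit i
      have h2 : (∑ j, toR z j ^ 2) = dotR (toR z) (toR z) := by
        simp [dotR, sq]
      calc (dotR (toR z) (uu i)) ^ 2 = (∑ j, toR z j * uu i j) ^ 2 := by
            simp [dotR]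
        _ ≤ (∑ j, toR z j ^ 2) * (∑ j, uu i j ^ 2) := h
        _ = dotR (toR z) (toR z) := by rw [h1, h2, mul_one]
    have habs : |dotR (toR z) (uu i)| ≤ Real.sqrt (dotR (toR z) (toR z)) :=
      Real.abs_le_sqrt hcs
    have : |dotR (toR z) (uu i)| < lam i * dotR (v i) (v i) * R :=
      lt_of_le_of_lt (le_trans habs (hM z hz)) (hR i)
    linarith [neg_abs_le (dotR (toR z) (uu i))]
  have hsum : ∀ i, dotR (toR z + a) (uu i) = dotR (toR z) (uu i) + dotR a (uu i) := by
    intro i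
    simp [dotR, add_mul, Finset.sum_add_distrib]
  refine ⟨fun i => if (x i : ℝ) ≤ dotR (toR z + a) (uu i) / (lam i * dotR (v i) (v i) * R)
    then 0 else -1, fun i => by dsimp only; split <;> simp, fun i => ?_⟩
  set c := lam i * dotR (v i) (v i) * R with hcdef
  have hci := hc i
  have hqlt : dotR (toR z + a) (uu i) / c < (x i : ℝ) + 1 := by
    have h1 : dotR a (uu i) / c < (x i : ℝ) + 1 := (ha i).2
    have h2 : dotR (toR z) (uu i) < 0 := hnegi z hz i
    rw [hsum i]
    calc (dotR (toR z) (uu i) + dotR a (uu i)) / c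
        ≤ dotR a (uu i) / c := by
          gcongr
          linarith
      _ < (x i : ℝ) + 1 := h1
  have hqgt : (x i : ℝ) - 1 < dotR (toR z + a) (uu i) / c := by
    have h1 : (x i : ℝ) ≤ dotR a (uu i) / c := (ha i).1
    have h2 : -c < dotR (toR z) (uu i) := ht i
    rw [hsum i]
    have : ((x i : ℝ) - 1) * c < dotR (toR z) (uu i) + dotR a (uu i) := by
      have h3 : (x i : ℝ) * c ≤ dotR a (uu i) := (le_div_iff₀ hci).mp h1
      nlinarith
    exact (lt_div_iff₀ hci).mpr this
  by_cases hcase : (x i : ℝ) ≤ dotR (toR z + a) (uu i) / c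
  · simp only [← hcdef, hcase, if_pos, Pi.add_apply]
    constructor
    · push_cast
      simpa using hcase
    · push_cast
      simpa using hqlt
  · simp only [← hcdef, hcase, if_neg, Pi.add_apply, not_false_iff]
    constructor
    · push_cast
      linarith
    · push_cast
      linarith [not_le.mp hcase]
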